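/- Let Φ be a unital quantum channel on ℂ^d and let ρ, σ be quantum states on ℂ^d. Then d_av^s(Φ(ρ), Φ(σ)) ≤ d_av^s(ρ, σ); equivalently, ‖Φ(ρ)−Φ(σ)‖_HS ≤ ‖ρ−σ‖_HS. -/

import Mathlib

open Matrix Kronecker ComplexOrder

/-- The Hilbert–Schmidt (Frobenius) norm of a complex matrix. -/
noncomputable def hsNorm {n : Type*} [Fintype n] (A : Matrix n n ℂ) : ℝ :=
  Real.sqrt ((Matrix.trace (Aᴴ * A)).re)

/-- The average-case distance between quantum states. -/
noncomputable def davS {n : Type*} [Fintype n] (ρ σ : Matrix n n ℂ) : ℝ :=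
  (1 / 2) * hsNorm (ρ - σ)

/-- A quantum state: a positive semidefinite matrix of trace one. -/
def IsState {n : Type*} [Fintype n] (ρ : Matrix n n ℂ) : Prop :=
  ρ.PosSemidef ∧ ρ.trace = 1

/-- The (normalized) Choi matrix `J_Λ = (1/d) ∑ᵢⱼ E_ij ⊗ Λ(E_ij)` of a linear map on matrices. -/
noncomputable def choi {n : Type*} [Fintype n] [DecidableEq n]
    (Λ : Matrix n n ℂ →ₗ[ℂ] Matrix n n ℂ) : Matrix (n × n) (n × n) ℂ :=
  ((Fintype.card n : ℂ))⁻¹ •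
    ∑ i, ∑ j, (Matrix.single i j (1 : ℂ)) ⊗ₖ Λ (Matrix.single i j (1 : ℂ))

/-- A quantum channel: a completely positive (positive semidefinite Choi matrix)
trace-preserving linear map. -/
def IsChannel {n : Type*} [Fintype n] [DecidableEq n]
    (Λ : Matrix n n ℂ →ₗ[ℂ] Matrix n n ℂ) : Prop :=
  (choi Λ).PosSemidef ∧ ∀ X, (Λ X).trace = X.trace

/-- The trace of a positive semidefinite complex matrix has nonnegative real part. -/
lemma aux_trace_re_nonneg {n : Type*} [Fintype n] [DecidableEq n] {M : Matrix n n ℂ}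
    (hM : M.PosSemidef) : 0 ≤ M.trace.re := by
  have h : ∀ k, 0 ≤ (M k k).re := by
    intro k
    exact (Complex.le_def.mp hM.diag_nonneg).1
  rw [Matrix.trace, Complex.re_sum]
  exact Finset.sum_nonneg fun k _ => h k

lemma aux_choi_apply (d : ℕ) (Φ : Matrix (Fin d) (Fin d) ℂ →ₗ[ℂ] Matrix (Fin d) (Fin d) ℂ)
    (i j k l : Fin d) :
    choi Φ (i, k) (j, l) = (d : ℂ)⁻¹ * Φ (Matrix.single i j 1) k l := by
  rw [choi]
  simp only [Matrix.smul_apply, Matrix.sum_apply, Matrix.kroneckerMap_apply,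
    Matrix.single, Matrix.of_apply, ite_mul, one_mul, zero_mul,
    Fintype.card_fin, smul_eq_mul]
  congr 1
  rw [Finset.sum_comm]
  rw [Finset.sum_eq_single j ?_ ?_]
  · rw [Finset.sum_eq_single i ?_ ?_]
    · simp
    · intro b _ hb; simp [hb]
    · simp
  · intro b _ hb; simp [hb]
  · simp

lemma aux_kraus_entry (d : ℕ) (B : Matrix (Fin d × Fin d) (Fin d × Fin d) ℂ) (i j k l : Fin d) :
    (∑ m, (Matrix.of fun k i => star (B m (i, k))) * Matrix.single i j (1:ℂ) *
      (Matrix.of fun k i => star (B m (i, k)))ᴴ) k l = (Bᴴ * B) (i, k) (j, l) := by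
  simp only [Matrix.sum_apply, Matrix.mul_apply, Matrix.single,
    Matrix.conjTranspose_apply, Matrix.of_apply, star_star, ite_and, mul_ite, ite_mul,
    mul_one, mul_zero, zero_mul, one_mul]
  simp [Finset.sum_ite_eq, Finset.sum_ite_eq']

theorem statement7 (d : ℕ)
    (Φ : Matrix (Fin d) (Fin d) ℂ →ₗ[ℂ] Matrix (Fin d) (Fin d) ℂ)
    (hΦ : IsChannel Φ) (hΦunital : Φ 1 = 1)
    (ρ σ : Matrix (Fin d) (Fin d) ℂ) (hρ : IsState ρ) (hσ : IsState σ) :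
    davS (Φ ρ) (Φ σ) ≤ davS ρ σ := by
  rcases Nat.eq_zero_or_pos d with hd | hd
  · subst hd
    simp [davS, hsNorm, Matrix.trace]
  obtain ⟨hchoi, htp⟩ := hΦ
  open scoped MatrixOrder in
  obtain ⟨B, hB⟩ := CStarAlgebra.nonneg_iff_eq_star_mul_self.mp hchoi.nonneg
  set A : Fin d × Fin d → Matrix (Fin d) (Fin d) ℂ :=
    fun m => Matrix.of fun k i => star (B m (i, k)) with hA
  have hd' : (d : ℂ) ≠ 0 := Nat.cast_ne_zero.mpr hd.ne'
  -- Kraus form on basis matrices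
  have hbasis : ∀ i j, Φ (Matrix.single i j 1) =
      (d : ℂ) • ∑ m, A m * Matrix.single i j 1 * (A m)ᴴ := by
    intro i j
    ext k l
    have h1 := aux_choi_apply d Φ i j k l
    rw [hB, Matrix.star_eq_conjTranspose] at h1
    have h2 := aux_kraus_entry d B i j k l
    rw [Matrix.smul_apply, h2, h1, smul_eq_mul]
    field_simp
  -- Kraus form for all matrices
  let L : Matrix (Fin d) (Fin d) ℂ →ₗ[ℂ] Matrix (Fin d) (Fin d) ℂ :=
    { toFun := fun X => (d : ℂ) • ∑ m, A m * X * (A m)ᴴ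
      map_add' := fun X Y => by
        simp [Matrix.add_mul, Matrix.mul_add, Finset.sum_add_distrib, smul_add]
      map_smul' := fun c X => by
        simp only [Matrix.mul_smul, Matrix.smul_mul, ← Finset.smul_sum, RingHom.id_apply]
        rw [smul_comm] }
  have hΦL : Φ = L := by
    apply Module.Basis.ext (Matrix.stdBasis ℂ (Fin d) (Fin d))
    rintro ⟨i, j⟩
    rw [Matrix.stdBasis_eq_single]
    exact hbasis i j
  have hKraus : ∀ X, Φ X = (d : ℂ) • ∑ m, A m * X * (A m)ᴴ := fun X => by rw [hΦL]; rfl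
  set X := ρ - σ with hX
  set Y := Φ X with hY
  have hunit : (d : ℂ) • ∑ m, A m * (A m)ᴴ = 1 := by
    have h := hKraus 1
    rw [hΦunital] at h
    simpa [Matrix.mul_one] using h.symm
  have hherm : Φ Xᴴ = Yᴴ := by
    rw [hKraus, hY, hKraus]
    rw [Matrix.conjTranspose_smul]
    simp [Matrix.conjTranspose_sum, Matrix.conjTranspose_mul, Matrix.mul_assoc]
  set W : Fin d × Fin d → Matrix (Fin d) (Fin d) ℂ :=
    fun m => X * (A m)ᴴ - (A m)ᴴ * Y with hW
  have e1 : ∀ m, (W m)ᴴ * W m =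
      A m * (Xᴴ * X) * (A m)ᴴ - (A m * Xᴴ * (A m)ᴴ) * Y - Yᴴ * (A m * X * (A m)ᴴ)
        + Yᴴ * (A m * (A m)ᴴ) * Y := by
    intro m
    simp only [hW, Matrix.conjTranspose_sub, Matrix.conjTranspose_mul,
      Matrix.conjTranspose_conjTranspose]
    noncomm_ring
  have key : Φ (Xᴴ * X) = Yᴴ * Y + (d : ℂ) • ∑ m, (W m)ᴴ * W m := by
    have step : (d : ℂ) • ∑ m, (W m)ᴴ * W m =
        ((d : ℂ) • ∑ m, A m * (Xᴴ * X) * (A m)ᴴ)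
          - ((d : ℂ) • ∑ m, A m * Xᴴ * (A m)ᴴ) * Y
          - Yᴴ * ((d : ℂ) • ∑ m, A m * X * (A m)ᴴ)
          + Yᴴ * ((d : ℂ) • ∑ m, A m * (A m)ᴴ) * Y := by
      simp only [e1, Finset.sum_add_distrib, Finset.sum_sub_distrib, smul_add, smul_sub,
        ← Finset.sum_mul, ← Finset.mul_sum, Matrix.smul_mul, Matrix.mul_smul]
    rw [step, ← hKraus, ← hKraus, ← hKraus, hherm, hunit, hY, Matrix.mul_one]
    abel
  -- trace inequality
  have htr : (Yᴴ * Y).trace.re ≤ (Xᴴ * X).trace.re := by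
    have t1 : (Φ (Xᴴ * X)).trace = (Xᴴ * X).trace := htp _
    have t2 : (Xᴴ * X).trace.re
        = (Yᴴ * Y).trace.re + ((d : ℂ) • ∑ m, (W m)ᴴ * W m).trace.re := by
      rw [← t1, key, Matrix.trace_add, Complex.add_re]
    have t3 : 0 ≤ ((d : ℂ) • ∑ m, (W m)ᴴ * W m).trace.re := by
      rw [Matrix.trace_smul, smul_eq_mul, Complex.mul_re]
      simp only [Complex.natCast_re, Complex.natCast_im, zero_mul, sub_zero]
      apply mul_nonneg (Nat.cast_nonneg d)
      rw [Matrix.trace_sum, Complex.re_sum]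
      exact Finset.sum_nonneg fun m _ =>
        aux_trace_re_nonneg (Matrix.posSemidef_conjTranspose_mul_self (W m))
    linarith
  -- conclude
  have hsub : Φ ρ - Φ σ = Y := by rw [hY, hX, map_sub]
  rw [davS, davS, hsub, hsNorm, hsNorm]
  have := Real.sqrt_le_sqrt htr
  nlinarith [Real.sqrt_nonneg (((ρ - σ)ᴴ * (ρ - σ)).trace.re)]
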